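/- Let N ≥ 3. The wheel poset H_N contains the standard example S_N as an induced subposet; consequently, the order dimension of H_N is at least N. -/
import Mathlib


/-- The cyclic interval ⟨i,j⟩ inside {1,…,N}: elements k with (k−i) mod N ≤ (j−i) mod N. -/
def cyc (N i j : ℕ) : Finset ℕ :=
  (Finset.Icc 1 N).filter (fun k => (k + N - i) % N ≤ (j + N - i) % N)

/-- Index pairs (i,j) of wheel elements: i,j ∈ [N] with j+1 ≢ i (mod N). -/
def wheelPairs (N : ℕ) : Finset (ℕ × ℕ) :=
  (Finset.Icc 1 N ×ˢ Finset.Icc 1 N).filter (fun p => (p.2 + 1) % N ≠ p.1 % N)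

/-- Ground set of the wheel H_N: the elements r_{i,j} (as `some (i,j)`) plus `none` = min. -/
def wheelGround (N : ℕ) : Finset (Option (ℕ × ℕ)) :=
  insert none ((wheelPairs N).image some)

/-- Order of the wheel: min below all, r_{i,j} ≤ r_{i',j'} iff ⟨i',j'⟩ ⊆ ⟨i,j⟩. -/
def wheelLe (N : ℕ) : Option (ℕ × ℕ) → Option (ℕ × ℕ) → Prop
  | none, _ => True
  | some _, none => False
  | some p, some q => cyc N q.1 q.2 ⊆ cyc N p.1 p.2

/-- The (reflexive) order of the standard example S_k on Fin k ⊕ Fin k: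
`inl i` is a_i, `inr j` is b_j, with a_i ≤ b_j iff i ≠ j. -/
def stdLe (k : ℕ) : (Fin k ⊕ Fin k) → (Fin k ⊕ Fin k) → Prop
  | .inl i, .inl j => i = j
  | .inl i, .inr j => i ≠ j
  | .inr _, .inl _ => False
  | .inr i, .inr j => i = j

/-- `r` has a realizer of size `n`: n linear orders whose intersection is `r`. -/
def realizes {α : Type*} (r : α → α → Prop) (n : ℕ) : Prop :=
  ∃ L : Fin n → α → α → Prop, (∀ m, IsLinearOrder α (L m)) ∧
    ∀ a b, r a b ↔ ∀ m, L m a b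

/-- Order dimension of the relation `r`. -/
noncomputable def odim {α : Type*} (r : α → α → Prop) : ℕ :=
  sInf {n | realizes r n}


/-- closed form of the cyclic distance -/
def D (N i j : ℕ) : ℕ := if i ≤ j then j - i else j + N - i
lemma D_spec (N i j : ℕ) : (i ≤ j ∧ D N i j = j - i) ∨ (j < i ∧ D N i j = j + N - i) := by
  unfold D; split_ifs with h
  · exact Or.inl ⟨h, rfl⟩
  · exact Or.inr ⟨by omega, rfl⟩
lemma mod_closed {N i j : ℕ} (hi1 : 1 ≤ i) (hiN : i ≤ N) (hj1 : 1 ≤ j) (hjN : j ≤ N) :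
    (j + N - i) % N = D N i j := by
  unfold D; split_ifs with h
  · have h2 : j + N - i = (j - i) + N := by omega
    rw [h2, Nat.add_mod_right, Nat.mod_eq_of_lt (by omega)]
  · exact Nat.mod_eq_of_lt (by omega)
lemma mem_cyc {N i j k : ℕ} (hi1 : 1 ≤ i) (hiN : i ≤ N) (hj1 : 1 ≤ j) (hjN : j ≤ N) :
    k ∈ cyc N i j ↔ (1 ≤ k ∧ k ≤ N) ∧ D N i k ≤ D N i j := by
  unfold cyc
  rw [Finset.mem_filter, Finset.mem_Icc]
  constructor
  · rintro ⟨⟨hk1, hk2⟩, h⟩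
    rw [mod_closed hi1 hiN hk1 hk2, mod_closed hi1 hiN hj1 hjN] at h
    exact ⟨⟨hk1, hk2⟩, h⟩
  · rintro ⟨⟨hk1, hk2⟩, h⟩
    rw [mod_closed hi1 hiN hk1 hk2, mod_closed hi1 hiN hj1 hjN]
    exact ⟨⟨hk1, hk2⟩, h⟩
lemma mod_small {N i : ℕ} (h1 : 1 ≤ i) (h2 : i ≤ N) : i % N = if i = N then 0 else i := by
  split_ifs with h
  · simp [h]
  · exact Nat.mod_eq_of_lt (by omega)
lemma mod_succ {N j : ℕ} (hN : 3 ≤ N) (h1 : 1 ≤ j) (h2 : j ≤ N) :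
    (j + 1) % N = if j = N then 1 else if j + 1 = N then 0 else j + 1 := by
  split_ifs with h h'
  · have : j + 1 = 1 + N := by omega
    rw [this, Nat.add_mod_right]
    exact Nat.mod_eq_of_lt (by omega)
  · rw [h']; exact Nat.mod_self N
  · exact Nat.mod_eq_of_lt (by omega)
lemma dCond {N i j : ℕ} (hN : 3 ≤ N) (hi1 : 1 ≤ i) (hiN : i ≤ N) (hj1 : 1 ≤ j) (hjN : j ≤ N) :
    ((j + 1) % N ≠ i % N) ↔ D N i j ≠ N - 1 := by
  rw [mod_succ hN hj1 hjN, mod_small hi1 hiN]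
  unfold D
  split_ifs <;> omega
lemma mem_wheelPairs {N : ℕ} {p : ℕ × ℕ} (hN : 3 ≤ N) :
    p ∈ wheelPairs N ↔ (1 ≤ p.1 ∧ p.1 ≤ N) ∧ (1 ≤ p.2 ∧ p.2 ≤ N) ∧ D N p.1 p.2 ≠ N - 1 := by
  unfold wheelPairs
  rw [Finset.mem_filter, Finset.mem_product, Finset.mem_Icc, Finset.mem_Icc]
  constructor
  · rintro ⟨⟨h1, h2⟩, h3⟩
    exact ⟨h1, h2, (dCond hN h1.1 h1.2 h2.1 h2.2).mp h3⟩
  · rintro ⟨h1, h2, h3⟩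
    exact ⟨⟨h1, h2⟩, (dCond hN h1.1 h1.2 h2.1 h2.2).mpr h3⟩
lemma cyc_inj {N : ℕ} (hN : 3 ≤ N) {p q : ℕ × ℕ} (hp : p ∈ wheelPairs N) (hq : q ∈ wheelPairs N)
    (h : cyc N p.1 p.2 = cyc N q.1 q.2) : p = q := by
  obtain ⟨i, j⟩ := p
  obtain ⟨i', j'⟩ := q
  rw [mem_wheelPairs hN] at hp hq
  dsimp only at hp hq
  obtain ⟨⟨hi1, hi2⟩, ⟨hj1, hj2⟩, hd1⟩ := hp
  obtain ⟨⟨hi1', hi2'⟩, ⟨hj1', hj2'⟩, hd2⟩ := hq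
  have key : ∀ k, 1 ≤ k → k ≤ N →
      (D N i k ≤ D N i j ↔ D N i' k ≤ D N i' j') := by
    intro k hk1 hk2
    have h' := Finset.ext_iff.mp h k
    rw [mem_cyc hi1 hi2 hj1 hj2, mem_cyc hi1' hi2' hj1' hj2'] at h'
    constructor
    · intro hh; exact (h'.mp ⟨⟨hk1, hk2⟩, hh⟩).2
    · intro hh; exact (h'.mpr ⟨⟨hk1, hk2⟩, hh⟩).2
  -- predecessors
  obtain ⟨ip, hip⟩ : ∃ ip, (i = 1 ∧ ip = N) ∨ (2 ≤ i ∧ ip = i - 1) := by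
    by_cases h1 : i = 1
    · exact ⟨N, Or.inl ⟨h1, rfl⟩⟩
    · exact ⟨i - 1, Or.inr ⟨by omega, rfl⟩⟩
  obtain ⟨ip', hip'⟩ : ∃ ip', (i' = 1 ∧ ip' = N) ∨ (2 ≤ i' ∧ ip' = i' - 1) := by
    by_cases h1 : i' = 1
    · exact ⟨N, Or.inl ⟨h1, rfl⟩⟩
    · exact ⟨i' - 1, Or.inr ⟨by omega, rfl⟩⟩
  have hipb : 1 ≤ ip ∧ ip ≤ N := by omega
  have hipb' : 1 ≤ ip' ∧ ip' ≤ N := by omega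
  have e1 : D N i' i ≤ D N i' j' := by
    refine (key i hi1 hi2).mp ?_
    have := D_spec N i i; omega
  have e3 : D N i i' ≤ D N i j := by
    refine (key i' hi1' hi2').mpr ?_
    have := D_spec N i' i'; omega
  have e2 : ¬ D N i' ip ≤ D N i' j' := by
    intro hh
    have h5 := D_spec N i ip
    have h6 := D_spec N i j
    have := (key ip hipb.1 hipb.2).mpr hh
    omega
  have e4 : ¬ D N i ip' ≤ D N i j := by
    intro hh
    have h5 := D_spec N i' ip'
    have h6 := D_spec N i' j'
    have := (key ip' hipb'.1 hipb'.2).mp hh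
    omega
  have hii : i = i' := by
    have s1 := D_spec N i' i
    have s2 := D_spec N i i'
    have s3 := D_spec N i' ip
    have s4 := D_spec N i ip'
    have s5 := D_spec N i j
    have s6 := D_spec N i' j'
    omega
  subst hii
  have hjj : j = j' := by
    have e5 : D N i j ≤ D N i j' := by
      refine (key j hj1 hj2).mp ?_
      omega
    have e6 : D N i j' ≤ D N i j := by
      refine (key j' hj1' hj2').mpr ?_
      omega
    have s1 := D_spec N i j
    have s2 := D_spec N i j'
    omega
  rw [hjj]
def wsucc (N i : ℕ) : ℕ := i % N + 1
def wpred (N i : ℕ) : ℕ := (i + N - 2) % N + 1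
lemma wsucc_spec {N i : ℕ} (h1 : 1 ≤ i) (h2 : i ≤ N) :
    (i = N ∧ wsucc N i = 1) ∨ (i < N ∧ wsucc N i = i + 1) := by
  unfold wsucc
  by_cases h : i = N
  · subst h; left; simp
  · right
    rw [Nat.mod_eq_of_lt (by omega)]
    omega
lemma wpred_spec {N i : ℕ} (hN : 3 ≤ N) (h1 : 1 ≤ i) (h2 : i ≤ N) :
    (i = 1 ∧ wpred N i = N) ∨ (2 ≤ i ∧ wpred N i = i - 1) := by
  unfold wpred
  by_cases h : i = 1
  · subst h; left
    have h3 : 1 + N - 2 = N - 1 := by omega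
    rw [h3, Nat.mod_eq_of_lt (by omega)]
    omega
  · right
    have h3 : i + N - 2 = (i - 2) + N := by omega
    rw [h3, Nat.add_mod_right, Nat.mod_eq_of_lt (by omega)]
    omega
lemma bb_mem {N t : ℕ} (hN : 3 ≤ N) (h1 : 1 ≤ t) (h2 : t ≤ N) : (t, t) ∈ wheelPairs N := by
  rw [mem_wheelPairs hN]
  dsimp only
  refine ⟨⟨h1, h2⟩, ⟨h1, h2⟩, ?_⟩
  have := D_spec N t t
  omega
lemma aa_mem {N t : ℕ} (hN : 3 ≤ N) (h1 : 1 ≤ t) (h2 : t ≤ N) :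
    (wsucc N t, wpred N t) ∈ wheelPairs N := by
  rw [mem_wheelPairs hN]
  dsimp only
  have hs := wsucc_spec h1 h2
  have hp := wpred_spec hN h1 h2
  have hd := D_spec N (wsucc N t) (wpred N t)
  exact ⟨by omega, by omega, by omega⟩
lemma cyc_bb {N t : ℕ} (hN : 3 ≤ N) (h1 : 1 ≤ t) (h2 : t ≤ N) : cyc N t t = {t} := by
  ext k
  rw [Finset.mem_singleton]
  constructor
  · intro hk
    have hk1 : 1 ≤ k ∧ k ≤ N := by
      have := (Finset.mem_filter.mp hk).1
      rw [Finset.mem_Icc] at this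
      exact this
    rw [mem_cyc h1 h2 h1 h2] at hk
    have s1 := D_spec N t k
    have s2 := D_spec N t t
    omega
  · intro hk
    subst hk
    rw [mem_cyc h1 h2 h1 h2]
    exact ⟨⟨h1, h2⟩, le_refl _⟩
lemma cyc_aa {N t : ℕ} (hN : 3 ≤ N) (h1 : 1 ≤ t) (h2 : t ≤ N) :
    cyc N (wsucc N t) (wpred N t) = (Finset.Icc 1 N).erase t := by
  have hs := wsucc_spec h1 h2
  have hp := wpred_spec hN h1 h2
  have hsb : 1 ≤ wsucc N t ∧ wsucc N t ≤ N := by omega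
  have hpb : 1 ≤ wpred N t ∧ wpred N t ≤ N := by omega
  ext k
  rw [Finset.mem_erase, Finset.mem_Icc,
    mem_cyc hsb.1 hsb.2 hpb.1 hpb.2]
  have s1 := D_spec N (wsucc N t) k
  have s2 := D_spec N (wsucc N t) (wpred N t)
  constructor
  · rintro ⟨⟨hk1, hk2⟩, hk⟩
    refine ⟨?_, hk1, hk2⟩
    omega
  · rintro ⟨hkt, hk1, hk2⟩
    exact ⟨⟨hk1, hk2⟩, by omega⟩
lemma wheelLe_refl (N : ℕ) (x : Option (ℕ × ℕ)) : wheelLe N x x := by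
  cases x
  · trivial
  · exact Finset.Subset.refl _
lemma memG {N : ℕ} {p : ℕ × ℕ} (hp : p ∈ wheelPairs N) : some p ∈ wheelGround N :=
  Finset.mem_insert_of_mem (Finset.mem_image_of_mem _ hp)
lemma embed (N : ℕ) (hN : 3 ≤ N) :
    ∃ f : (Fin N ⊕ Fin N) → {x : Option (ℕ × ℕ) // x ∈ wheelGround N},
      Function.Injective f ∧
      ∀ a b, stdLe N a b ↔ wheelLe N (f a).1 (f b).1 := by
  have hb : ∀ i : Fin N, 1 ≤ i.1 + 1 ∧ i.1 + 1 ≤ N := fun i => ⟨by omega, by omega⟩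
  let f : (Fin N ⊕ Fin N) → {x : Option (ℕ × ℕ) // x ∈ wheelGround N} := fun x => match x with
    | .inl i => ⟨some (wsucc N (i.1 + 1), wpred N (i.1 + 1)),
        memG (aa_mem hN (hb i).1 (hb i).2)⟩
    | .inr j => ⟨some (j.1 + 1, j.1 + 1), memG (bb_mem hN (hb j).1 (hb j).2)⟩
  have hiff : ∀ a b, stdLe N a b ↔ wheelLe N (f a).1 (f b).1 := by
    rintro (i | j) (i' | j')
    · show (i = i') ↔ cyc N (wsucc N (i'.1+1)) (wpred N (i'.1+1)) ⊆
        cyc N (wsucc N (i.1+1)) (wpred N (i.1+1))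
      rw [cyc_aa hN (hb i').1 (hb i').2, cyc_aa hN (hb i).1 (hb i).2]
      constructor
      · intro h; subst h; exact Finset.Subset.refl _
      · intro h
        by_contra hne
        have hmem : (i.1 + 1) ∈ (Finset.Icc 1 N).erase (i'.1 + 1) := by
          rw [Finset.mem_erase, Finset.mem_Icc]
          have : i.1 ≠ i'.1 := fun hh => hne (Fin.ext hh)
          omega
        have := h hmem
        rw [Finset.mem_erase] at this
        exact this.1 rfl
    · show (i ≠ j') ↔ cyc N (j'.1+1) (j'.1+1) ⊆
        cyc N (wsucc N (i.1+1)) (wpred N (i.1+1))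
      rw [cyc_bb hN (hb j').1 (hb j').2, cyc_aa hN (hb i).1 (hb i).2,
        Finset.singleton_subset_iff, Finset.mem_erase, Finset.mem_Icc]
      constructor
      · intro h
        have : i.1 ≠ j'.1 := fun hh => h (Fin.ext hh)
        omega
      · rintro ⟨h, -⟩ hij
        subst hij
        exact h rfl
    · show False ↔ cyc N (wsucc N (i'.1+1)) (wpred N (i'.1+1)) ⊆ cyc N (j.1+1) (j.1+1)
      rw [cyc_aa hN (hb i').1 (hb i').2, cyc_bb hN (hb j).1 (hb j).2]
      simp only [false_iff]
      intro h
      obtain ⟨x, y, hxy, hx, hy⟩ : ∃ x y, x ≠ y ∧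
          x ∈ (Finset.Icc 1 N).erase (i'.1 + 1) ∧ y ∈ (Finset.Icc 1 N).erase (i'.1 + 1) := by
        by_cases h1 : i'.1 + 1 = 1
        · exact ⟨2, 3, by omega, by rw [Finset.mem_erase, Finset.mem_Icc]; omega,
            by rw [Finset.mem_erase, Finset.mem_Icc]; omega⟩
        · by_cases h2 : i'.1 + 1 = 2
          · exact ⟨1, 3, by omega, by rw [Finset.mem_erase, Finset.mem_Icc]; omega,
              by rw [Finset.mem_erase, Finset.mem_Icc]; omega⟩
          · exact ⟨1, 2, by omega, by rw [Finset.mem_erase, Finset.mem_Icc]; omega,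
              by rw [Finset.mem_erase, Finset.mem_Icc]; omega⟩
      have hx' := Finset.mem_singleton.mp (h hx)
      have hy' := Finset.mem_singleton.mp (h hy)
      exact hxy (hx'.trans hy'.symm)
    · show (j = j') ↔ cyc N (j'.1+1) (j'.1+1) ⊆ cyc N (j.1+1) (j.1+1)
      rw [cyc_bb hN (hb j').1 (hb j').2, cyc_bb hN (hb j).1 (hb j).2,
        Finset.singleton_subset_iff, Finset.mem_singleton]
      constructor
      · intro h; subst h; rfl
      · intro h; exact Fin.ext (by omega)
  have hinj : Function.Injective f := by
    intro a b hab
    have h1 : stdLe N a b := (hiff a b).mpr (by rw [hab]; exact wheelLe_refl N _)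
    have h2 : stdLe N b a := (hiff b a).mpr (by rw [hab]; exact wheelLe_refl N _)
    rcases a with i | j <;> rcases b with i' | j'
    · rw [show stdLe N (.inl i) (.inl i') = (i = i') from rfl] at h1; rw [h1]
    · exact h2.elim
    · exact h1.elim
    · rw [show stdLe N (.inr j) (.inr j') = (j = j') from rfl] at h1; rw [h1]
  exact ⟨f, hinj, hiff⟩
lemma exists_realizes {α : Type*} [Fintype α] (r : α → α → Prop)
    (hpo : IsPartialOrder α r) : ∃ n, realizes r n := by
  classical
  haveI := hpo
  have step : ∀ a b : α, ∃ s : α → α → Prop, IsLinearOrder α s ∧ (∀ x y, r x y → s x y) ∧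
      (¬ r a b → ¬ s a b) := by
    intro a b
    by_cases hab : r a b
    · obtain ⟨s, hs, hrs⟩ := extend_partialOrder r
      exact ⟨s, hs, hrs, fun h => absurd hab h⟩
    · have hne : a ≠ b := fun h => hab (h ▸ hpo.refl a)
      let r' : α → α → Prop := fun x y => r x y ∨ (r x b ∧ r a y)
      haveI hpo' : IsPartialOrder α r' := by
        refine { refl := ?_, trans := ?_, antisymm := ?_ }
        case refine_1 => exact fun x => Or.inl (hpo.refl x)
        case refine_2 =>
          rintro x y z (hxy | ⟨hxb, hay⟩) (hyz | ⟨hyb, haz⟩)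
          · exact Or.inl (hpo.trans _ _ _ hxy hyz)
          · exact Or.inr ⟨hpo.trans _ _ _ hxy hyb, haz⟩
          · exact Or.inr ⟨hxb, hpo.trans _ _ _ hay hyz⟩
          · exact Or.inr ⟨hxb, haz⟩
        case refine_3 =>
          rintro x y (hxy | ⟨hxb, hay⟩) (hyx | ⟨hyb, hax⟩)
          · exact hpo.antisymm _ _ hxy hyx
          · exact absurd (hpo.trans _ _ _ hax (hpo.trans _ _ _ hxy hyb)) hab
          · exact absurd (hpo.trans _ _ _ hay (hpo.trans _ _ _ hyx hxb)) hab
          · exact absurd (hpo.trans _ _ _ hax hxb) hab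
      obtain ⟨s, hs, hrs⟩ := extend_partialOrder r'
      refine ⟨s, hs, fun x y h => hrs x y (Or.inl h), fun _ hsab => ?_⟩
      have hba : s b a := hrs b a (Or.inr ⟨hpo.refl b, hpo.refl a⟩)
      exact hne (hs.antisymm a b hsab hba)
  choose S hS1 hS2 hS3 using step
  let e := Fintype.equivFin (α × α)
  refine ⟨Fintype.card (α × α), fun m => S (e.symm m).1 (e.symm m).2,
    fun m => hS1 _ _, fun a b => ?_⟩
  constructor
  · intro h m
    exact hS2 _ _ a b h
  · intro h
    by_contra hr
    refine hS3 a b hr ?_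
    have := h (e (a, b))
    simpa using this
lemma mem_ground_some {N : ℕ} {p : ℕ × ℕ} (h : some p ∈ wheelGround N) : p ∈ wheelPairs N := by
  unfold wheelGround at h
  rcases Finset.mem_insert.mp h with h | h
  · exact absurd h (by simp)
  · obtain ⟨q, hq, hqp⟩ := Finset.mem_image.mp h
    cases Option.some.injEq q p ▸ hqp
    exact hq
lemma wheel_po (N : ℕ) (hN : 3 ≤ N) :
    IsPartialOrder {x : Option (ℕ × ℕ) // x ∈ wheelGround N} (fun x y => wheelLe N x.1 y.1) := by
  refine { refl := ?_, trans := ?_, antisymm := ?_ }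
  · exact fun x => wheelLe_refl N x.1
  · rintro ⟨x, hx⟩ ⟨y, hy⟩ ⟨z, hz⟩ h1 h2
    rcases x with _ | p <;> rcases y with _ | q <;> rcases z with _ | s
    all_goals first
      | trivial
      | exact h1.elim
      | exact h2.elim
      | exact Finset.Subset.trans h2 h1
  · rintro ⟨x, hx⟩ ⟨y, hy⟩ h1 h2
    rcases x with _ | p <;> rcases y with _ | q
    · rfl
    · exact h2.elim
    · exact h1.elim
    · have hp := mem_ground_some hx
      have hq := mem_ground_some hy
      have heq := cyc_inj hN hp hq (Finset.Subset.antisymm h2 h1)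
      exact Subtype.ext (congrArg some heq)

theorem wheel_dim_ge (N : ℕ) (hN : 3 ≤ N) :
    (∃ f : (Fin N ⊕ Fin N) → {x : Option (ℕ × ℕ) // x ∈ wheelGround N},
      Function.Injective f ∧
      ∀ a b, stdLe N a b ↔ wheelLe N (f a).1 (f b).1) ∧
    N ≤ odim (fun x y : {x : Option (ℕ × ℕ) // x ∈ wheelGround N} =>
      wheelLe N x.1 y.1) := by
  obtain ⟨f, hinj, hiff⟩ := embed N hN
  refine ⟨⟨f, hinj, hiff⟩, ?_⟩
  have hpo := wheel_po N hN
  obtain ⟨n0, hn0⟩ := exists_realizes _ hpo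
  have hne : {n | realizes (fun x y : {x : Option (ℕ × ℕ) // x ∈ wheelGround N} =>
      wheelLe N x.1 y.1) n}.Nonempty := ⟨n0, hn0⟩
  have hmem := Nat.sInf_mem hne
  show N ≤ sInf {n | realizes _ n}
  by_contra hlt
  push_neg at hlt
  obtain ⟨L, hL, hLr⟩ := hmem
  have hg : ∀ i : Fin N, ∃ m, ¬ L m (f (.inl i)) (f (.inr i)) := by
    intro i
    have hnr : ¬ wheelLe N (f (.inl i)).1 (f (.inr i)).1 := fun h => (hiff _ _).mpr h rfl
    by_contra hall
    push_neg at hall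
    exact hnr ((hLr _ _).mpr hall)
  choose g hg using hg
  obtain ⟨i, j, hij, hgij⟩ := Fintype.exists_ne_map_eq_of_card_lt g (by simpa using hlt)
  haveI := hL (g i)
  have t1 : L (g i) (f (.inl i)) (f (.inr j)) :=
    (hLr _ _).mp ((hiff (Sum.inl i) (Sum.inr j)).mp hij) (g i)
  have t2 : L (g i) (f (.inl j)) (f (.inr i)) :=
    (hLr _ _).mp ((hiff (Sum.inl j) (Sum.inr i)).mp (Ne.symm hij)) (g i)
  have b1 : ¬ L (g i) (f (.inl i)) (f (.inr i)) := hg i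
  have b2 : ¬ L (g i) (f (.inl j)) (f (.inr j)) := by rw [hgij]; exact hg j
  have h1 : L (g i) (f (.inr i)) (f (.inl i)) := (total_of (L (g i)) _ _).resolve_left b1
  have h2 : L (g i) (f (.inr j)) (f (.inl j)) := (total_of (L (g i)) _ _).resolve_left b2
  have c1 : L (g i) (f (.inr j)) (f (.inl i)) :=
    trans_of (L (g i)) (trans_of (L (g i)) h2 t2) h1
  have c2 : f (.inl i) = f (.inr j) := antisymm_of (L (g i)) t1 c1
  have := hinj c2
  simp at this
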